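/- Let 𝒰 be a metrically Ramsey ultrafilter on ℕ (with the metric d(x,y) = |x−y|). If 𝒰 has a thin member T ∈ 𝒰, then there exists a mapping φ : ℕ → ω such that the image ultrafilter φ(𝒰) is a selective (Ramsey) ultrafilter on ω, and φ is finite-to-one on some member U ∈ 𝒰. -/

import Mathlib

open Filter

section Aux

variable (T : Set ℕ)

/-- Bound for pairs in `T` at distance `≤ d`. -/
noncomputable def pairBound (d : ℕ) : ℕ :=
  sSup {v | v ∈ T ∧ ∃ u ∈ T, u < v ∧ v - u ≤ d}

/-- Block boundaries. -/
noncomputable def blk : ℕ → ℕ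
  | 0 => 0
  | j + 1 => blk j + pairBound T (blk j) + 1

/-- Block index of a point. -/
noncomputable def phiT (x : ℕ) : ℕ := Nat.findGreatest (fun j => blk T j ≤ x) x

lemma blk_lt_succ (j : ℕ) : blk T j < blk T (j + 1) := by
  simp [blk]

lemma blk_strictMono : StrictMono (blk T) :=
  strictMono_nat_of_lt_succ (blk_lt_succ T)

lemma le_blk_self (j : ℕ) : j ≤ blk T j := by
  induction j with
  | zero => simp [blk]
  | succ n ih => have := blk_lt_succ T n; omega

lemma phiT_spec (x : ℕ) : blk T (phiT T x) ≤ x ∧ x < blk T (phiT T x + 1) := by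
  constructor
  · exact Nat.findGreatest_spec (P := fun j => blk T j ≤ x) (m := 0)
      (Nat.zero_le x) (Nat.zero_le x)
  · by_contra h
    push_neg at h
    have h2 : phiT T x + 1 ≤ x := le_trans (le_blk_self T _) h
    have h3 : ¬ blk T (phiT T x + 1) ≤ x :=
      Nat.findGreatest_is_greatest (P := fun j => blk T j ≤ x)
        (Nat.lt_succ_self (phiT T x)) h2
    exact h3 h

lemma phiT_mem_two (z j : ℕ) (h1 : blk T j ≤ z) (h2 : z < blk T (j + 2)) :
    phiT T z = j ∨ phiT T z = j + 1 := by
  obtain ⟨hl, hr⟩ := phiT_spec T z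
  have a1 : blk T j < blk T (phiT T z + 1) := lt_of_le_of_lt h1 hr
  have a2 : blk T (phiT T z) < blk T (j + 2) := lt_of_le_of_lt hl h2
  have b1 : j < phiT T z + 1 := (blk_strictMono T).lt_iff_lt.mp a1
  have b2 : phiT T z < j + 2 := (blk_strictMono T).lt_iff_lt.mp a2
  omega

variable {t : ℕ → ℕ}

lemma pairBound_bdd (hmono : StrictMono t) (hrange : Set.range t = T)
    (hgap : Tendsto (fun n => t (n + 1) - t n) atTop atTop) (d : ℕ) :
    BddAbove {v | v ∈ T ∧ ∃ u ∈ T, u < v ∧ v - u ≤ d} := by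
  obtain ⟨N, hN⟩ := eventually_atTop.mp (hgap.eventually_ge_atTop (d + 1))
  refine ⟨t N, ?_⟩
  rintro v ⟨hvT, u, huT, huv, hdle⟩
  rw [← hrange] at hvT huT
  obtain ⟨n, rfl⟩ := hvT
  obtain ⟨m, rfl⟩ := huT
  rcases le_or_gt n N with h | h
  · exact hmono.monotone h
  · exfalso
    have hmn : m < n := hmono.lt_iff_lt.mp huv
    have h1 : m ≤ n - 1 := by omega
    have h2 : t m ≤ t (n - 1) := hmono.monotone h1
    have h3 : d + 1 ≤ t (n - 1 + 1) - t (n - 1) := hN (n - 1) (by omega)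
    have h4 : n - 1 + 1 = n := by omega
    rw [h4] at h3
    omega

lemma pairBound_le (hmono : StrictMono t) (hrange : Set.range t = T)
    (hgap : Tendsto (fun n => t (n + 1) - t n) atTop atTop)
    {u v d : ℕ} (huT : u ∈ T) (hvT : v ∈ T) (huv : u < v) (hd : v - u ≤ d) :
    v ≤ pairBound T d :=
  le_csSup (pairBound_bdd T hmono hrange hgap d) ⟨hvT, u, huT, huv, hd⟩

lemma pairBound_mono (hmono : StrictMono t) (hrange : Set.range t = T)
    (hgap : Tendsto (fun n => t (n + 1) - t n) atTop atTop)
    {d d' : ℕ} (h : d ≤ d') : pairBound T d ≤ pairBound T d' := by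
  by_cases hne : {v | v ∈ T ∧ ∃ u ∈ T, u < v ∧ v - u ≤ d}.Nonempty
  · exact csSup_le_csSup (pairBound_bdd T hmono hrange hgap d') hne
      (fun v ⟨hv, u, hu, h1, h2⟩ => ⟨hv, u, hu, h1, le_trans h2 h⟩)
  · have : {v | v ∈ T ∧ ∃ u ∈ T, u < v ∧ v - u ≤ d} = ∅ :=
      Set.not_nonempty_iff_eq_empty.mp hne
    simp only [pairBound, this, csSup_empty]
    exact Nat.zero_le _

/-- Key structural lemma: for a "parallelogram" inside `T` whose three upper
points all lie in the parity class `r` of blocks, the three upper points lie in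
a single block. -/
lemma key (hmono : StrictMono t) (hrange : Set.range t = T)
    (hgap : Tendsto (fun n => t (n + 1) - t n) atTop atTop) (r : ℕ)
    {x e d : ℕ} (he : 1 ≤ e) (hd : 1 ≤ d)
    (hT1 : x + e ∈ T) (hT2 : x + d ∈ T) (hT3 : x + d + e ∈ T)
    (hp1 : phiT T (x + e) % 2 = r) (hp2 : phiT T (x + d) % 2 = r)
    (hp3 : phiT T (x + d + e) % 2 = r) :
    phiT T (x + e) = phiT T (x + d + e) ∧ phiT T (x + d) = phiT T (x + d + e) := by
  have hb1 : x + d + e ≤ pairBound T e :=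
    pairBound_le T hmono hrange hgap hT2 hT3 (by omega) (by omega)
  have hb2 : x + d + e ≤ pairBound T d :=
    pairBound_le T hmono hrange hgap hT1 hT3 (by omega) (by omega)
  set m := min e d with hm
  set j := phiT T m with hj
  obtain ⟨hjl, hjr⟩ := phiT_spec T m
  have hbm : x + d + e ≤ pairBound T m := by
    rcases le_total e d with h | h
    · simpa [hm, min_eq_left h] using hb1
    · simpa [hm, min_eq_right h] using hb2
  have hmb : pairBound T m < blk T (j + 2) := by
    have h1 : pairBound T m ≤ pairBound T (blk T (j + 1)) :=
      pairBound_mono T hmono hrange hgap (le_of_lt hjr)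
    have h2 : blk T (j + 2) = blk T (j + 1) + pairBound T (blk T (j + 1)) + 1 := rfl
    omega
  have hub : x + d + e < blk T (j + 2) := lt_of_le_of_lt hbm hmb
  have hml : blk T j ≤ m := hjl
  have q1 : phiT T (x + e) = j ∨ phiT T (x + e) = j + 1 :=
    phiT_mem_two T _ j (by omega) (by omega)
  have q2 : phiT T (x + d) = j ∨ phiT T (x + d) = j + 1 :=
    phiT_mem_two T _ j (by omega) (by omega)
  have q3 : phiT T (x + d + e) = j ∨ phiT T (x + d + e) = j + 1 :=
    phiT_mem_two T _ j (by omega) (by omega)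
  omega

/-- Uniqueness of nondegenerate realizations of a distance. -/
lemma unique_nondeg (hmono : StrictMono t) (hrange : Set.range t = T)
    (hgap : Tendsto (fun n => t (n + 1) - t n) atTop atTop) (r : ℕ)
    {d x y : ℕ} (hd : 1 ≤ d)
    (hxT : x ∈ T) (hxdT : x + d ∈ T)
    (hxdp : phiT T (x + d) % 2 = r) (hxp : phiT T x % 2 = r)
    (hyT : y ∈ T) (hydT : y + d ∈ T)
    (hydp : phiT T (y + d) % 2 = r) (hyp : phiT T y % 2 = r)
    (hnx : phiT T x ≠ phiT T (x + d)) (hny : phiT T y ≠ phiT T (y + d)) :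
    x = y := by
  rcases lt_trichotomy x y with h | h | h
  · exfalso
    set e := y - x with he
    have hy : y = x + e := by omega
    have hyd : y + d = x + d + e := by omega
    have hyT' : x + e ∈ T := by rw [← hy]; exact hyT
    have hydT' : x + d + e ∈ T := by rw [← hyd]; exact hydT
    have hyp' : phiT T (x + e) % 2 = r := by rw [← hy]; exact hyp
    have hydp' : phiT T (x + d + e) % 2 = r := by rw [← hyd]; exact hydp
    have := key T hmono hrange hgap r (x := x) (e := e) (d := d) (by omega) hd
      hyT' hxdT hydT' hyp' hxdp hydp'
    have e1 : phiT T y = phiT T (x + e) := by rw [← hy]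
    have e2 : phiT T (y + d) = phiT T (x + d + e) := by rw [← hyd]
    exact hny (e1.trans (this.1.trans e2.symm))
  · exact h
  · exfalso
    set e := x - y with he
    have hx : x = y + e := by omega
    have hxd : x + d = y + d + e := by omega
    have hxT' : y + e ∈ T := by rw [← hx]; exact hxT
    have hxdT' : y + d + e ∈ T := by rw [← hxd]; exact hxdT
    have hxp' : phiT T (y + e) % 2 = r := by rw [← hx]; exact hxp
    have hxdp' : phiT T (y + d + e) % 2 = r := by rw [← hxd]; exact hxdp
    have := key T hmono hrange hgap r (x := y) (e := e) (d := d) (by omega) hd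
      hxT' hydT hxdT' hxp' hydp hxdp'
    have e1 : phiT T x = phiT T (y + e) := by rw [← hx]
    have e2 : phiT T (x + d) = phiT T (y + d + e) := by rw [← hxd]
    exact hnx (e1.trans (this.1.trans e2.symm))

lemma natdist_cast (x y : ℕ) : (Nat.dist x y : ℝ) = dist x y := by
  rcases le_total x y with h | h
  · rw [Nat.dist_eq_sub_of_le h, Nat.dist_eq]
    have : (x : ℝ) ≤ y := by exact_mod_cast h
    rw [abs_sub_comm, abs_of_nonneg (by linarith)]
    push_cast [h]
    ring
  · rw [Nat.dist_eq_sub_of_le_right h, Nat.dist_eq]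
    have : (y : ℝ) ≤ x := by exact_mod_cast h
    rw [abs_of_nonneg (by linarith)]
    push_cast [h]
    ring

lemma natdist_of_dist {x y z w : ℕ} (h : dist x y = dist z w) :
    Nat.dist x y = Nat.dist z w := by
  have : (Nat.dist x y : ℝ) = (Nat.dist z w : ℝ) := by
    rw [natdist_cast, natdist_cast, h]
  exact_mod_cast this

end Aux


/-- A `{0,1}`-coloring of pairs of naturals is isometric if it only depends on
the distance `|x - y|`. -/
def IsIsometricColoringNat (χ : ℕ → ℕ → Bool) : Prop :=
  ∀ x y z t : ℕ, dist x y = dist z t → χ x y = χ z t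

/-- An ultrafilter on `ℕ` is metrically Ramsey (for the metric `|x - y|`) if
every isometric coloring has a monochrome member. -/
def MetricallyRamseyNat (𝒰 : Ultrafilter ℕ) : Prop :=
  ∀ χ : ℕ → ℕ → Bool, IsIsometricColoringNat χ →
    ∃ U ∈ 𝒰, ∃ k : Bool, ∀ x ∈ U, ∀ y ∈ U, x ≠ y → χ x y = k

/-- A free ultrafilter on `ℕ` is Ramsey (selective) if every symmetric
`{0,1}`-coloring of pairs has a monochrome member. -/
def IsRamseyUltrafilter (𝒱 : Ultrafilter ℕ) : Prop :=
  (∀ n : ℕ, 𝒱 ≠ pure n) ∧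
  ∀ χ : ℕ → ℕ → Bool, (∀ a b, χ a b = χ b a) →
    ∃ V ∈ 𝒱, ∃ k : Bool, ∀ x ∈ V, ∀ y ∈ V, x ≠ y → χ x y = k

/-- A subset `T = {t_n : n < ω}` of `ℕ` (enumerated increasingly) is thin if
`t_{n+1} - t_n → ∞`. -/
def IsThin (T : Set ℕ) : Prop :=
  ∃ t : ℕ → ℕ, StrictMono t ∧ Set.range t = T ∧
    Filter.Tendsto (fun n => t (n + 1) - t n) Filter.atTop Filter.atTop

/-- Proposition 3.2: if a metrically Ramsey ultrafilter `𝒰` on `ℕ` has a thin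
member, then there is `φ : ℕ → ω` such that `φ(𝒰)` is a selective (Ramsey)
ultrafilter and `φ` is finite-to-one on some member of `𝒰`. -/
theorem stmt18 (𝒰 : Ultrafilter ℕ) (hfree : ∀ n : ℕ, 𝒰 ≠ pure n)
    (hMR : MetricallyRamseyNat 𝒰) (T : Set ℕ) (hT : T ∈ 𝒰) (hthin : IsThin T) :
    ∃ φ : ℕ → ℕ, IsRamseyUltrafilter (Ultrafilter.map φ 𝒰) ∧
      ∃ U ∈ 𝒰, ∀ k : ℕ, (U ∩ φ ⁻¹' {k}).Finite := by
  classical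
  obtain ⟨t, hmono, hrange, hgap⟩ := hthin
  obtain ⟨r, hr⟩ : ∃ r, {z | phiT T z % 2 = r} ∈ 𝒰 := by
    rcases Ultrafilter.mem_or_compl_mem 𝒰 {z | phiT T z % 2 = 0} with h | h
    · exact ⟨0, h⟩
    · refine ⟨1, ?_⟩
      convert h using 1
      ext z
      simp only [Set.mem_compl_iff, Set.mem_setOf_eq]
      omega
  have hUstar : T ∩ {z | phiT T z % 2 = r} ∈ 𝒰 := Filter.inter_mem hT hr
  have hfib : ∀ k : ℕ, (phiT T ⁻¹' {k}).Finite := by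
    intro k
    apply (Set.finite_Iio (blk T (k + 1))).subset
    intro z hz
    simp only [Set.mem_preimage, Set.mem_singleton_iff] at hz
    have h2 := (phiT_spec T z).2
    rw [hz] at h2
    exact h2
  refine ⟨phiT T, ⟨?_, ?_⟩, Set.univ, Filter.univ_mem, ?_⟩
  · -- freeness
    intro n hn
    have h1 : phiT T ⁻¹' {n} ∈ 𝒰 := by
      have h0 : {n} ∈ Ultrafilter.map (phiT T) 𝒰 := by
        rw [hn]; exact Ultrafilter.mem_pure.mpr rfl
      exact Ultrafilter.mem_map.mp h0
    obtain ⟨m, _, hm⟩ := Ultrafilter.eq_pure_of_finite_mem (hfib n) h1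
    exact hfree m hm
  · -- Ramsey property
    intro χ hχ
    set Pd : ℕ → ℕ → Prop := fun d x =>
      (x ∈ T ∧ phiT T x % 2 = r) ∧ (x + d ∈ T ∧ phiT T (x + d) % 2 = r) ∧
        phiT T x ≠ phiT T (x + d) with hPd
    set c : ℕ → Bool := fun d =>
      if h : ∃ x, Pd d x then χ (phiT T h.choose) (phiT T (h.choose + d)) else false
      with hc
    set χ' : ℕ → ℕ → Bool := fun u v => c (Nat.dist u v) with hχ'
    have hiso : IsIsometricColoringNat χ' := by
      intro a b u v h
      simp only [hχ']
      rw [natdist_of_dist h]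
    obtain ⟨U, hU, k, hk⟩ := hMR χ' hiso
    refine ⟨phiT T '' (U ∩ (T ∩ {z | phiT T z % 2 = r})), ?_, k, ?_⟩
    · rw [Ultrafilter.mem_map]
      exact Filter.mem_of_superset (Filter.inter_mem hU hUstar)
        (Set.subset_preimage_image _ _)
    · have claim : ∀ p q : ℕ, p ∈ U → p ∈ T → phiT T p % 2 = r →
          q ∈ U → q ∈ T → phiT T q % 2 = r → phiT T p ≠ phiT T q → p < q →
          χ (phiT T p) (phiT T q) = k := by
        intro p q hpU hpT hpr hqU hqT hqr hne hlt
        set d := q - p with hd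
        have hd1 : 1 ≤ d := by omega
        have hq : q = p + d := by omega
        have hqT' : p + d ∈ T := by rw [← hq]; exact hqT
        have hqr' : phiT T (p + d) % 2 = r := by rw [← hq]; exact hqr
        have hne' : phiT T p ≠ phiT T (p + d) := by rw [← hq]; exact hne
        have hPdp : Pd d p := ⟨⟨hpT, hpr⟩, ⟨hqT', hqr'⟩, hne'⟩
        have hex : ∃ x, Pd d x := ⟨p, hPdp⟩
        have hch : Pd d hex.choose := hex.choose_spec
        have heq : hex.choose = p :=
          unique_nondeg T hmono hrange hgap r hd1
            hch.1.1 hch.2.1.1 hch.2.1.2 hch.1.2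
            hpT hqT' hqr' hpr
            hch.2.2 hne'
        have hcd : c d = χ (phiT T p) (phiT T (p + d)) := by
          rw [hc]
          simp only [dif_pos hex]
          rw [heq]
        have hdist : Nat.dist p q = d := Nat.dist_eq_sub_of_le (le_of_lt hlt)
        have hmain := hk p hpU q hqU (Nat.ne_of_lt hlt)
        rw [hχ'] at hmain
        simp only at hmain
        rw [hdist, hcd] at hmain
        have : χ (phiT T p) (phiT T q) = χ (phiT T p) (phiT T (p + d)) := by
          rw [← hq]
        rw [this]
        exact hmain
      rintro i hi j hj hij
      obtain ⟨p, hp, rfl⟩ := hi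
      obtain ⟨q, hq, rfl⟩ := hj
      obtain ⟨hpU, hpT, hpr⟩ := hp
      obtain ⟨hqU, hqT, hqr⟩ := hq
      rcases lt_trichotomy p q with h | h | h
      · exact claim p q hpU hpT hpr hqU hqT hqr hij h
      · exact absurd (congrArg (phiT T) h) hij
      · have hres := claim q p hqU hqT hqr hpU hpT hpr (Ne.symm hij) h
        rw [hχ (phiT T p) (phiT T q)]
        exact hres
  · intro k
    exact (hfib k).subset Set.inter_subset_right
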